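/- Let g ≥ 1, r ≥ 0 and n ≥ 2, and let 1 ≤ i ≤ n−1. Then in the group G(g,r,n) the following equalities hold: A_{i−1}A_{i+1} = v_i A_i v_i A_i and A_{i−1}A_{i+1} = A_i v_i A_i v_i (relation (T1) in the proof of Theorem 3.1). -/

import Mathlib

namespace LabruereParis

/-- `altWord a b m` is the alternating word `prod(a,b,m) = abab⋯` of length `m`. -/
def altWord {α : Type*} (a b : α) : ℕ → FreeGroup α
  | 0 => 1
  | k + 1 => FreeGroup.of a * altWord b a k

/-- The vertex set of the Coxeter graph `Γ_{g,r,n}`: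
`Sum.inl i` is `x_i` (`0 ≤ i ≤ r+1`), `Sum.inr (Sum.inl j)` is `y_{j+1}`
(`1 ≤ j+1 ≤ 2g-1`), the `Unit` vertex is `z`, the next summand indexes
`u_1,…,u_r`, and the last summand indexes `v_1,…,v_{n-1}`. -/
abbrev S (g r n : ℕ) := Fin (r + 2) ⊕ Fin (2 * g - 1) ⊕ Unit ⊕ Fin r ⊕ Fin (n - 1)

/-- The Coxeter matrix of `Γ_{g,r,n}`: `m(x_i,y_1) = 3`, `m(y_j,y_{j+1}) = 3`,
`m(z,y_3) = 3`, `m(x_{r+1},v_1) = 4`, `m(v_j,v_{j+1}) = 3`, and label `2`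
for every other pair of distinct vertices. -/
def cox (g r n : ℕ) : S g r n → S g r n → ℕ
  | Sum.inl _, Sum.inr (Sum.inl j) => if (j : ℕ) = 0 then 3 else 2
  | Sum.inr (Sum.inl j), Sum.inl _ => if (j : ℕ) = 0 then 3 else 2
  | Sum.inr (Sum.inl j), Sum.inr (Sum.inl k) =>
      if j = k then 1 else if (j : ℕ) + 1 = (k : ℕ) ∨ (k : ℕ) + 1 = (j : ℕ) then 3 else 2
  | Sum.inr (Sum.inr (Sum.inl _)), Sum.inr (Sum.inl j) => if (j : ℕ) = 2 then 3 else 2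
  | Sum.inr (Sum.inl j), Sum.inr (Sum.inr (Sum.inl _)) => if (j : ℕ) = 2 then 3 else 2
  | Sum.inl i, Sum.inr (Sum.inr (Sum.inr (Sum.inr k))) =>
      if (i : ℕ) = r + 1 ∧ (k : ℕ) = 0 then 4 else 2
  | Sum.inr (Sum.inr (Sum.inr (Sum.inr k))), Sum.inl i =>
      if (i : ℕ) = r + 1 ∧ (k : ℕ) = 0 then 4 else 2
  | Sum.inr (Sum.inr (Sum.inr (Sum.inr j))), Sum.inr (Sum.inr (Sum.inr (Sum.inr k))) =>
      if j = k then 1 else if (j : ℕ) + 1 = (k : ℕ) ∨ (k : ℕ) + 1 = (j : ℕ) then 3 else 2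
  | a, b => if a = b then 1 else 2

/-- The generator `x_i` of the free group (`0 ≤ i ≤ r+1`; junk value `1` out of range). -/
def fx (g r n i : ℕ) : FreeGroup (S g r n) :=
  if h : i < r + 2 then FreeGroup.of (Sum.inl ⟨i, h⟩) else 1

/-- The generator `y_j` (`1 ≤ j ≤ 2g-1`; junk value `1` out of range). -/
def fy (g r n j : ℕ) : FreeGroup (S g r n) :=
  if h : 1 ≤ j ∧ j ≤ 2 * g - 1 then FreeGroup.of (Sum.inr (Sum.inl ⟨j - 1, by omega⟩)) else 1

/-- The generator `z`. -/
def fz (g r n : ℕ) : FreeGroup (S g r n) := FreeGroup.of (Sum.inr (Sum.inr (Sum.inl ())))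

/-- The generator `u_i` (`1 ≤ i ≤ r`; junk value `1` out of range). -/
def fu (g r n i : ℕ) : FreeGroup (S g r n) :=
  if h : 1 ≤ i ∧ i ≤ r then
    FreeGroup.of (Sum.inr (Sum.inr (Sum.inr (Sum.inl ⟨i - 1, by omega⟩)))) else 1

/-- The generator `v_i` (`1 ≤ i ≤ n-1`; junk value `1` out of range). -/
def fv (g r n i : ℕ) : FreeGroup (S g r n) :=
  if h : 1 ≤ i ∧ i ≤ n - 1 then
    FreeGroup.of (Sum.inr (Sum.inr (Sum.inr (Sum.inr ⟨i - 1, by omega⟩)))) else 1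

/-- The Artin relators of `Γ_{g,r,n}`. -/
def artinRels (g r n : ℕ) : Set (FreeGroup (S g r n)) :=
  {w | ∃ a b : S g r n, a ≠ b ∧
      w = altWord a b (cox g r n a b) * (altWord b a (cox g r n a b))⁻¹}

/-- `W(i,j) = (x_jy_1x_{i+1}x_jy_1x_j)⁻¹ · x_i · (x_jy_1x_{i+1}x_jy_1x_j)`. -/
def Wrel (g r n i j : ℕ) : FreeGroup (S g r n) :=
  (fx g r n j * fy g r n 1 * fx g r n (i + 1) * fx g r n j * fy g r n 1 * fx g r n j)⁻¹ *
    fx g r n i *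
    (fx g r n j * fy g r n 1 * fx g r n (i + 1) * fx g r n j * fy g r n 1 * fx g r n j)

/-- The relators (R1)–(R8b) of Theorem 3.1 of Labruère–Paris. -/
def extraRels (g r n : ℕ) : Set (FreeGroup (S g r n)) :=
  {w |
    -- (R1)
    (2 ≤ g ∧ w = (fy g r n 1 * fy g r n 2 * fy g r n 3 * fz g r n) ^ 10 *
        ((fx g r n 0 * fy g r n 1 * fy g r n 2 * fy g r n 3 * fz g r n) ^ 6)⁻¹) ∨
    -- (R2)
    (3 ≤ g ∧ w = (fy g r n 1 * fy g r n 2 * fy g r n 3 * fz g r n *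
          fy g r n 4 * fy g r n 5) ^ 12 *
        ((fx g r n 0 * fy g r n 1 * fy g r n 2 * fy g r n 3 * fz g r n *
          fy g r n 4 * fy g r n 5) ^ 9)⁻¹) ∨
    -- (R3)
    (∃ i j k : ℕ, k < j ∧ j < i ∧ i ≤ r ∧
        w = fx g r n k * Wrel g r n i j * (Wrel g r n i j * fx g r n k)⁻¹) ∨
    -- (R4)
    (2 ≤ g ∧ ∃ i j : ℕ, j < i ∧ i ≤ r ∧
        w = fy g r n 2 * Wrel g r n i j * (Wrel g r n i j * fy g r n 2)⁻¹) ∨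
    -- (R5)
    (2 ≤ g ∧ 1 ≤ r ∧ w = fu g r n 1 *
        ((fx g r n 0 * fx g r n 1 * fy g r n 1 * fy g r n 2 * fy g r n 3 * fz g r n) ^ 5 *
          ((fx g r n 1 * fy g r n 1 * fy g r n 2 * fy g r n 3 * fz g r n) ^ 6)⁻¹)⁻¹) ∨
    -- (R6)
    (2 ≤ g ∧ ∃ i : ℕ, 1 ≤ i ∧ i ≤ r - 1 ∧
        w = fu g r n (i + 1) *
          ((fx g r n i * fx g r n (i + 1) * fy g r n 1 * fy g r n 2 * fy g r n 3 *
              fz g r n) ^ 5 *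
            ((fx g r n (i + 1) * fy g r n 1 * fy g r n 2 * fy g r n 3 * fz g r n) ^ 6)⁻¹ *
            (fx g r n 0 * fy g r n 1 * fx g r n (i + 1)) ^ 4 *
            ((fx g r n 0 * fx g r n i * fy g r n 1 * fx g r n (i + 1)) ^ 3)⁻¹)⁻¹) ∨
    -- (R7)
    (2 ≤ n ∧ w = (fv g r n 1 * fx g r n (r + 1) * fy g r n 1 * fx g r n r) ^ 4 *
        ((fv g r n 1 * fx g r n (r + 1) * fy g r n 1) ^ 6)⁻¹) ∨
    -- (R8a)
    (1 ≤ n ∧ 2 ≤ g ∧ r = 0 ∧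
        w = (fx g r n 0 * fx g r n 1 * fy g r n 1 * fy g r n 2 * fy g r n 3 * fz g r n) ^ 5 *
          ((fx g r n 1 * fy g r n 1 * fy g r n 2 * fy g r n 3 * fz g r n) ^ 6)⁻¹) ∨
    -- (R8b)
    (1 ≤ n ∧ 2 ≤ g ∧ 1 ≤ r ∧
        w = (fx g r n r * fx g r n (r + 1) * fy g r n 1 * fy g r n 2 * fy g r n 3 *
            fz g r n) ^ 5 *
          ((fx g r n (r + 1) * fy g r n 1 * fy g r n 2 * fy g r n 3 * fz g r n) ^ 6)⁻¹ *
          ((fx g r n 0 * fx g r n r * fy g r n 1 * fx g r n (r + 1)) ^ 3 *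
            ((fx g r n 0 * fy g r n 1 * fx g r n (r + 1)) ^ 4)⁻¹)⁻¹)}

/-- The group `G(g,r,n)`: the quotient of the Artin group `A(Γ_{g,r,n})` by the
relations (R1)–(R8b) of Theorem 3.1. -/
abbrev G (g r n : ℕ) := PresentedGroup (artinRels g r n ∪ extraRels g r n)

/-- The image of `x_i` in `G(g,r,n)`. -/
def X (g r n i : ℕ) : G g r n := PresentedGroup.mk _ (fx g r n i)

/-- The image of `y_j` in `G(g,r,n)`. -/
def Y (g r n j : ℕ) : G g r n := PresentedGroup.mk _ (fy g r n j)

/-- The image of `z` in `G(g,r,n)`. -/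
def Z (g r n : ℕ) : G g r n := PresentedGroup.mk _ (fz g r n)

/-- The image of `u_i` in `G(g,r,n)`. -/
def U (g r n i : ℕ) : G g r n := PresentedGroup.mk _ (fu g r n i)

/-- The image of `v_i` in `G(g,r,n)`. -/
def V (g r n i : ℕ) : G g r n := PresentedGroup.mk _ (fv g r n i)

/-- `A_i = x_r^{1-i}(x_{r+1}v_1v_2⋯v_{i-1})^i` in `G(g,r,n)` (so `A_0 = x_r` and
`A_1 = x_{r+1}`). -/
def A (g r n i : ℕ) : G g r n :=
  X g r n r ^ ((1 : ℤ) - (i : ℤ)) *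
    (X g r n (r + 1) * ((List.range (i - 1)).map fun k => V g r n (k + 1)).prod) ^ i

variable {g r n : ℕ}

lemma mk_rel {w : FreeGroup (S g r n)} (h : w ∈ artinRels g r n ∪ extraRels g r n) :
    PresentedGroup.mk (artinRels g r n ∪ extraRels g r n) w = 1 :=
  (QuotientGroup.eq_one_iff _).2 (Subgroup.subset_normalClosure h)

lemma artin_rel (a b : S g r n) (hab : a ≠ b) :
    PresentedGroup.mk (artinRels g r n ∪ extraRels g r n) (altWord a b (cox g r n a b)) =
      PresentedGroup.mk (artinRels g r n ∪ extraRels g r n) (altWord b a (cox g r n a b)) := by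
  have h := mk_rel (g := g) (r := r) (n := n) (Or.inl ⟨a, b, hab, rfl⟩)
  rw [map_mul, map_inv, mul_inv_eq_one] at h
  exact h

lemma comm_of {a b : S g r n} (hab : a ≠ b) (h2 : cox g r n a b = 2) :
    Commute (PresentedGroup.mk (artinRels g r n ∪ extraRels g r n) (FreeGroup.of a))
      (PresentedGroup.mk (artinRels g r n ∪ extraRels g r n) (FreeGroup.of b)) := by
  have h := artin_rel a b hab
  rw [h2] at h
  have e1 : altWord a b 2 = FreeGroup.of a * (FreeGroup.of b * 1) := rfl
  have e2 : altWord b a 2 = FreeGroup.of b * (FreeGroup.of a * 1) := rfl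
  rw [e1, e2] at h
  simpa [Commute, SemiconjBy] using h

lemma braid_of {a b : S g r n} (hab : a ≠ b) (h3 : cox g r n a b = 3) :
    PresentedGroup.mk (artinRels g r n ∪ extraRels g r n) (FreeGroup.of a) *
      PresentedGroup.mk _ (FreeGroup.of b) * PresentedGroup.mk _ (FreeGroup.of a) =
    PresentedGroup.mk (artinRels g r n ∪ extraRels g r n) (FreeGroup.of b) *
      PresentedGroup.mk _ (FreeGroup.of a) * PresentedGroup.mk _ (FreeGroup.of b) := by
  have h := artin_rel a b hab
  rw [h3] at h
  have e1 : altWord a b 3 = FreeGroup.of a * (FreeGroup.of b * (FreeGroup.of a * 1)) := rfl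
  have e2 : altWord b a 3 = FreeGroup.of b * (FreeGroup.of a * (FreeGroup.of b * 1)) := rfl
  rw [e1, e2] at h
  simpa [mul_assoc] using h

lemma braid4_of {a b : S g r n} (hab : a ≠ b) (h4 : cox g r n a b = 4) :
    PresentedGroup.mk (artinRels g r n ∪ extraRels g r n) (FreeGroup.of a) *
      PresentedGroup.mk _ (FreeGroup.of b) * PresentedGroup.mk _ (FreeGroup.of a) *
      PresentedGroup.mk _ (FreeGroup.of b) =
    PresentedGroup.mk (artinRels g r n ∪ extraRels g r n) (FreeGroup.of b) *
      PresentedGroup.mk _ (FreeGroup.of a) * PresentedGroup.mk _ (FreeGroup.of b) *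
      PresentedGroup.mk _ (FreeGroup.of a) := by
  have h := artin_rel a b hab
  rw [h4] at h
  have e1 : altWord a b 4 =
      FreeGroup.of a * (FreeGroup.of b * (FreeGroup.of a * (FreeGroup.of b * 1))) := rfl
  have e2 : altWord b a 4 =
      FreeGroup.of b * (FreeGroup.of a * (FreeGroup.of b * (FreeGroup.of a * 1))) := rfl
  rw [e1, e2] at h
  simpa [mul_assoc] using h

lemma V_eq {k : ℕ} (h1 : 1 ≤ k) (h2 : k ≤ n - 1) :
    V g r n k = PresentedGroup.mk (artinRels g r n ∪ extraRels g r n)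
      (FreeGroup.of (Sum.inr (Sum.inr (Sum.inr (Sum.inr (⟨k - 1, by omega⟩ : Fin (n - 1))))))) := by
  unfold V fv
  rw [dif_pos ⟨h1, h2⟩]

lemma V_junk {k : ℕ} (h : ¬(1 ≤ k ∧ k ≤ n - 1)) : V g r n k = 1 := by
  unfold V fv
  rw [dif_neg h, map_one]

lemma X_eq {i : ℕ} (h : i < r + 2) :
    X g r n i = PresentedGroup.mk (artinRels g r n ∪ extraRels g r n)
      (FreeGroup.of (Sum.inl (⟨i, h⟩ : Fin (r + 2)))) := by
  unfold X fx
  rw [dif_pos h]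

/-- braid relation between consecutive `v`'s -/
lemma rel_braid_vv {k : ℕ} (h1 : 1 ≤ k) (h2 : k + 1 ≤ n - 1) :
    V g r n k * V g r n (k + 1) * V g r n k = V g r n (k + 1) * V g r n k * V g r n (k + 1) := by
  rw [V_eq h1 (by omega), V_eq (by omega) h2]
  apply braid_of
  · simp only [ne_eq, Sum.inr.injEq, Fin.mk.injEq]
    omega
  · simp only [cox, Fin.mk.injEq]
    rw [if_neg (by omega), if_pos (by omega)]

/-- far commutation between `v`'s -/
lemma rel_comm_vv {j k : ℕ} (h1 : 1 ≤ j) (h2 : j + 2 ≤ k) :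
    Commute (V g r n j) (V g r n k) := by
  by_cases hk : k ≤ n - 1
  · rw [V_eq h1 (by omega), V_eq (by omega) hk]
    apply comm_of
    · simp only [ne_eq, Sum.inr.injEq, Fin.mk.injEq]
      omega
    · simp only [cox, Fin.mk.injEq]
      rw [if_neg (by omega), if_neg (by omega)]
  · rw [V_junk (k := k) (by omega)]
    exact Commute.one_right _

/-- the 4-braid relation between `x_{r+1}` and `v_1` -/
lemma rel_braid4 (hn : 2 ≤ n) :
    X g r n (r + 1) * V g r n 1 * X g r n (r + 1) * V g r n 1 =
      V g r n 1 * X g r n (r + 1) * V g r n 1 * X g r n (r + 1) := by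
  rw [V_eq le_rfl (by omega), X_eq (by omega)]
  apply braid4_of
  · simp
  · simp only [cox]
    rw [if_pos (by simp)]

/-- `x_{r+1}` commutes with `v_k`, `k ≥ 2` -/
lemma rel_comm_tv {k : ℕ} (h2 : 2 ≤ k) :
    Commute (X g r n (r + 1)) (V g r n k) := by
  by_cases hk : k ≤ n - 1
  · rw [V_eq (by omega) hk, X_eq (by omega)]
    apply comm_of
    · simp
    · simp only [cox]
      rw [if_neg (by simp; omega)]
  · rw [V_junk (k := k) (by omega)]
    exact Commute.one_right _

/-- `x_r` commutes with `x_{r+1}` -/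
lemma rel_comm_xt : Commute (X g r n r) (X g r n (r + 1)) := by
  rw [X_eq (by omega), X_eq (i := r + 1) (by omega)]
  apply comm_of
  · simp only [ne_eq, Sum.inl.injEq, Fin.mk.injEq]
    omega
  · simp only [cox]
    rw [if_neg (by simp only [Sum.inl.injEq, Fin.mk.injEq]; omega)]

/-- `x_r` commutes with every `v_k` -/
lemma rel_comm_xv {k : ℕ} : Commute (X g r n r) (V g r n k) := by
  by_cases hk : 1 ≤ k ∧ k ≤ n - 1
  · rw [V_eq hk.1 hk.2, X_eq (by omega)]
    apply comm_of
    · simp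
    · simp only [cox]
      rw [if_neg (by simp)]
  · rw [V_junk hk]
    exact Commute.one_right _

/-! ### helpers -/

section Helpers
variable {M : Type*} [Monoid M] {a b c d e f : M}

lemma pe2 (h : a * b = c * d) (x : M) : a * (b * x) = c * (d * x) := by
  rw [← mul_assoc, h, mul_assoc]

lemma pe3 (h : a * (b * c) = d * (e * f)) (x : M) :
    a * (b * (c * x)) = d * (e * (f * x)) := by
  rw [← mul_assoc, ← mul_assoc, ← mul_assoc, mul_assoc a b c, h, mul_assoc, mul_assoc, mul_assoc]

lemma comm_lc (h : Commute a b) (x : M) : a * (b * x) = b * (a * x) := by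
  rw [← mul_assoc, h.eq, mul_assoc]

end Helpers

/-! ### words in `G` -/

/-- `pV m = v_1 v_2 ⋯ v_m` -/
def pV (g r n : ℕ) : ℕ → G g r n
  | 0 => 1
  | m + 1 => pV g r n m * V g r n (m + 1)

/-- `dP a l = v_a v_{a-1} ⋯ v_{a-l+1}` (`l` letters, descending) -/
def dP (g r n : ℕ) : ℕ → ℕ → G g r n
  | _, 0 => 1
  | a, l + 1 => V g r n a * dP g r n (a - 1) l

/-- `pp m = x_{r+1} v_1 ⋯ v_m` -/
def pp (g r n m : ℕ) : G g r n := X g r n (r + 1) * pV g r n m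

/-- `TT m = v_m ⋯ v_1 x_{r+1} v_1 ⋯ v_m` -/
def TT (g r n m : ℕ) : G g r n := dP g r n m m * (X g r n (r + 1) * pV g r n m)

/-- `DD i = (x_{r+1} v_1 ⋯ v_{i-1})^i` -/
def DD (g r n i : ℕ) : G g r n := pp g r n (i - 1) ^ i

lemma pp_succ (m : ℕ) : pp g r n (m + 1) = pp g r n m * V g r n (m + 1) :=
  (mul_assoc _ _ _).symm

lemma dP_tail : ∀ (l a : ℕ), dP g r n a (l + 1) = dP g r n a l * V g r n (a - l)
  | 0, a => by simp [dP]
  | l + 1, a => by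
    rw [show dP g r n a (l + 1 + 1) = V g r n a * dP g r n (a - 1) (l + 1) from rfl,
      dP_tail l (a - 1), ← mul_assoc, show a - 1 - l = a - (l + 1) by omega]
    rfl

/-- far commutation of `v_k` with `pV j` -/
lemma comm_pV_vv {j k : ℕ} (h : j + 2 ≤ k) : Commute (pV g r n j) (V g r n k) := by
  induction j with
  | zero => exact Commute.one_left _
  | succ j ih =>
    exact Commute.mul_left (ih (by omega)) (rel_comm_vv (by omega) (by omega))

lemma comm_pp_vv {j k : ℕ} (h : j + 2 ≤ k) : Commute (pp g r n j) (V g r n k) :=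
  Commute.mul_left (rel_comm_tv (by omega)) (comm_pV_vv h)

/-- far commutation of `v_j` with `dP a l` (all letters of `dP a l` are ≥ `a-l+1 ≥ j+2`) -/
lemma comm_vv_dP {j : ℕ} (hj : 1 ≤ j) :
    ∀ l a : ℕ, j + l + 1 ≤ a → Commute (V g r n j) (dP g r n a l)
  | 0, a, _ => Commute.one_right _
  | l + 1, a, h =>
    Commute.mul_right (rel_comm_vv hj (by omega)) (comm_vv_dP hj l (a - 1) (by omega))

/-- the key shift relation: `pp m` conjugates `v_k` to `v_{k+1}` for `1 ≤ k ≤ m-1` -/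
lemma shift {m k : ℕ} (hm : m ≤ n - 1) (hk1 : 1 ≤ k) (hk : k + 1 ≤ m) :
    SemiconjBy (pp g r n m) (V g r n k) (V g r n (k + 1)) := by
  induction m with
  | zero => omega
  | succ m ih =>
    rcases Nat.lt_or_ge k m with h | h
    · rw [pp_succ]
      exact SemiconjBy.mul_left (ih (by omega) (by omega))
        ((rel_comm_vv (j := k) (k := m + 1) hk1 (by omega)).symm)
    · -- k = m
      have hkm : k = m := by omega
      subst hkm
      obtain ⟨j, rfl⟩ : ∃ j, k = j + 1 := ⟨k - 1, by omega⟩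
      have hpp : pp g r n (j + 2) = pp g r n j * (V g r n (j + 1) * V g r n (j + 2)) := by
        rw [pp_succ, pp_succ, mul_assoc]
      rw [hpp]
      refine SemiconjBy.mul_left (comm_pp_vv (by omega)) ?_
      -- SemiconjBy (a * b) a b from the braid relation
      have hbr := rel_braid_vv (g := g) (r := r) (n := n) (k := j + 1) (by omega) (by omega)
      unfold SemiconjBy
      rw [← mul_assoc, hbr, mul_assoc]

/-- iterated shift -/
lemma shift_pow {m : ℕ} (hm : m ≤ n - 1) :
    ∀ (d k : ℕ), 1 ≤ k → k + d ≤ m → SemiconjBy (pp g r n m ^ d) (V g r n k) (V g r n (k + d))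
  | 0, k, _, _ => by rw [pow_zero, Nat.add_zero]; exact SemiconjBy.one_left _
  | d + 1, k, hk1, hkd => by
    rw [pow_succ, show k + (d + 1) = (k + 1) + d by omega]
    exact SemiconjBy.mul_left (shift_pow hm d (k + 1) (by omega) (by omega))
      (shift hm hk1 (by omega))

/-- shift applied to a descending product -/
lemma shift_dP {m : ℕ} (hm : m ≤ n - 1) :
    ∀ (l a : ℕ), a ≤ m → l + 1 ≤ a →
      SemiconjBy (pp g r n m) (dP g r n (a - 1) l) (dP g r n a l)
  | 0, a, _, _ => SemiconjBy.one_right _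
  | l + 1, a, ha, hl => by
    have h1 : SemiconjBy (pp g r n m) (V g r n (a - 1)) (V g r n a) := by
      have h0 : SemiconjBy (pp g r n m) (V g r n (a - 1)) (V g r n (a - 1 + 1)) :=
        shift hm (by omega) (by omega)
      rwa [show a - 1 + 1 = a by omega] at h0
    have h2 : SemiconjBy (pp g r n m) (dP g r n (a - 1 - 1) l) (dP g r n (a - 1) l) :=
      shift_dP hm l (a - 1) (by omega) (by omega)
    have e1 : dP g r n (a - 1) (l + 1) = V g r n (a - 1) * dP g r n (a - 1 - 1) l := rfl
    have e2 : dP g r n a (l + 1) = V g r n a * dP g r n (a - 1) l := rfl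
    rw [e1, e2]
    exact h1.mul_right h2

/-- braid conjugation: from `aba = bab` get `a⁻¹(ba) = b(ab⁻¹)` -/
lemma braid_conj {Gr : Type*} [Group Gr] {a b : Gr} (h : a * b * a = b * a * b) :
    a⁻¹ * (b * a) = b * (a * b⁻¹) := by
  calc a⁻¹ * (b * a) = a⁻¹ * (b * a * b) * b⁻¹ := by group
    _ = a⁻¹ * (a * b * a) * b⁻¹ := by rw [← h]
    _ = b * (a * b⁻¹) := by group

/-- base case of the conjugation lemma -/
lemma clbase {m : ℕ} (hm1 : 1 ≤ m) :
    SemiconjBy (pp g r n m) ((V g r n m)⁻¹ * (V g r n (m + 1) * V g r n m))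
      (V g r n (m + 1)) := by
  obtain ⟨j, rfl⟩ : ∃ j, m = j + 1 := ⟨m - 1, by omega⟩
  have h1 : Commute (pp g r n j) (V g r n (j + 2)) := comm_pp_vv (by omega)
  unfold SemiconjBy
  rw [pp_succ]
  calc pp g r n j * V g r n (j + 1) *
        ((V g r n (j + 1))⁻¹ * (V g r n (j + 1 + 1) * V g r n (j + 1)))
      = pp g r n j * V g r n (j + 2) * V g r n (j + 1) := by group
    _ = V g r n (j + 2) * pp g r n j * V g r n (j + 1) := by rw [h1.eq]
    _ = V g r n (j + 1 + 1) * (pp g r n j * V g r n (j + 1)) := by rw [mul_assoc]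

/-- conjugating `v_{m+1}` by powers of `pp m` -/
lemma clem {m : ℕ} (hm : m ≤ n - 1) (hm1 : 1 ≤ m) :
    ∀ k, 1 ≤ k → k ≤ m →
      SemiconjBy (pp g r n m ^ k)
        ((dP g r n m k)⁻¹ * (V g r n (m + 1) * dP g r n m k)) (V g r n (m + 1)) := by
  intro k
  induction k with
  | zero => omega
  | succ k ih =>
    intro _ hk
    have hb : SemiconjBy (pp g r n m) ((V g r n m)⁻¹ * (V g r n (m + 1) * V g r n m))
        (V g r n (m + 1)) := clbase hm1
    rcases Nat.eq_zero_or_pos k with hk0 | hk1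
    · subst hk0
      rw [pow_one]
      have e : dP g r n m 1 = V g r n m := by simp [dP]
      rw [e]
      exact hb
    · have hs : SemiconjBy (pp g r n m) (dP g r n (m - 1) k) (dP g r n m k) :=
        shift_dP hm k m (le_refl m) (by omega)
      have comp := (hs.inv_right).mul_right
        (hb.mul_right hs)
      have e : (dP g r n m (k + 1))⁻¹ * (V g r n (m + 1) * dP g r n m (k + 1)) =
          (dP g r n (m - 1) k)⁻¹ *
            (((V g r n m)⁻¹ * (V g r n (m + 1) * V g r n m)) * dP g r n (m - 1) k) := by
        rw [show dP g r n m (k + 1) = V g r n m * dP g r n (m - 1) k from rfl]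
        group
      rw [e, pow_succ]
      exact SemiconjBy.mul_left (ih hk1 (by omega)) comp


/-- the conjugate `(dP m k)⁻¹ v_{m+1} (dP m k)` rewritten as a conjugate of `v_{m-k+1}` -/
lemma dlem {m : ℕ} (hm : m + 1 ≤ n - 1) :
    ∀ k, 1 ≤ k → k ≤ m →
      (dP g r n m k)⁻¹ * (V g r n (m + 1) * dP g r n m k) =
        dP g r n (m + 1) k * (V g r n (m - k + 1) * (dP g r n (m + 1) k)⁻¹) := by
  intro k
  induction k with
  | zero => omega
  | succ k ih =>
    intro _ hk
    rcases Nat.eq_zero_or_pos k with hk0 | hk1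
    · subst hk0
      have e1 : dP g r n m 1 = V g r n m := by simp [dP]
      have e2 : dP g r n (m + 1) 1 = V g r n (m + 1) := by simp [dP]
      have hbr : V g r n m * V g r n (m + 1) * V g r n m =
          V g r n (m + 1) * V g r n m * V g r n (m + 1) :=
        rel_braid_vv (by omega) (by omega)
      rw [e1, e2, show m - 1 + 1 = m by omega]
      exact braid_conj hbr
    · -- abbreviations
      have e1 : dP g r n m (k + 1) = dP g r n m k * V g r n (m - k) := dP_tail k m
      have e2 : dP g r n (m + 1) (k + 1) = dP g r n (m + 1) k * V g r n (m - k + 1) := by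
        rw [dP_tail k (m + 1), show m + 1 - k = m - k + 1 by omega]
      have hc : Commute (V g r n (m - k)) (dP g r n (m + 1) k) :=
        comm_vv_dP (by omega) k (m + 1) (by omega)
      have hbr : V g r n (m - k) * V g r n (m - k + 1) * V g r n (m - k) =
          V g r n (m - k + 1) * V g r n (m - k) * V g r n (m - k + 1) :=
        rel_braid_vv (by omega) (by omega)
      have ihk := ih hk1 (by omega)
      rw [show m - (k + 1) + 1 = m - k by omega, e1, e2]
      calc (dP g r n m k * V g r n (m - k))⁻¹ *
            (V g r n (m + 1) * (dP g r n m k * V g r n (m - k)))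
          = (V g r n (m - k))⁻¹ *
              ((dP g r n m k)⁻¹ * (V g r n (m + 1) * dP g r n m k) * V g r n (m - k)) := by
            group
        _ = (V g r n (m - k))⁻¹ *
              (dP g r n (m + 1) k * (V g r n (m - k + 1) * (dP g r n (m + 1) k)⁻¹) *
                V g r n (m - k)) := by rw [ihk]
        _ = (V g r n (m - k))⁻¹ *
              (dP g r n (m + 1) k *
                (V g r n (m - k + 1) * ((dP g r n (m + 1) k)⁻¹ * V g r n (m - k)))) := by
            group
        _ = (V g r n (m - k))⁻¹ *
              (dP g r n (m + 1) k *
                (V g r n (m - k + 1) * (V g r n (m - k) * (dP g r n (m + 1) k)⁻¹))) := by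
            rw [(hc.symm.inv_left).eq]
        _ = dP g r n (m + 1) k *
              ((V g r n (m - k))⁻¹ *
                (V g r n (m - k + 1) * (V g r n (m - k) * (dP g r n (m + 1) k)⁻¹))) := by
            rw [comm_lc hc.inv_left _]
        _ = dP g r n (m + 1) k *
              (V g r n (m - k + 1) *
                (V g r n (m - k) * ((V g r n (m - k + 1))⁻¹ * (dP g r n (m + 1) k)⁻¹))) := by
            rw [pe3 (braid_conj hbr) _]
        _ = dP g r n (m + 1) k * V g r n (m - k + 1) *
              (V g r n (m - k) * (dP g r n (m + 1) k * V g r n (m - k + 1))⁻¹) := by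
            group

/-- the partial products `(σq)^k σ = q^k ⋅ dP (m+1) (k+1)` -/
lemma star {m : ℕ} (hm : m + 1 ≤ n - 1) :
    ∀ k, k ≤ m → (V g r n (m + 1) * pp g r n m) ^ k * V g r n (m + 1) =
      pp g r n m ^ k * dP g r n (m + 1) (k + 1) := by
  intro k
  induction k with
  | zero => simp [dP]
  | succ k ih =>
    intro hk
    have hclem : SemiconjBy (pp g r n m ^ (k + 1))
        ((dP g r n m (k + 1))⁻¹ * (V g r n (m + 1) * dP g r n m (k + 1)))
        (V g r n (m + 1)) := clem (by omega) (by omega) (k + 1) (by omega) (by omega)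
    have hdlem : (dP g r n m (k + 1))⁻¹ * (V g r n (m + 1) * dP g r n m (k + 1)) =
        dP g r n (m + 1) (k + 1) *
          (V g r n (m - (k + 1) + 1) * (dP g r n (m + 1) (k + 1))⁻¹) :=
      dlem hm (k + 1) (by omega) (by omega)
    rw [show m - (k + 1) + 1 = m - k by omega] at hdlem
    calc (V g r n (m + 1) * pp g r n m) ^ (k + 1) * V g r n (m + 1)
        = (V g r n (m + 1) * pp g r n m) *
            ((V g r n (m + 1) * pp g r n m) ^ k * V g r n (m + 1)) := by
          rw [pow_succ', mul_assoc]
      _ = (V g r n (m + 1) * pp g r n m) * (pp g r n m ^ k * dP g r n (m + 1) (k + 1)) := by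
          rw [ih (by omega)]
      _ = V g r n (m + 1) * (pp g r n m ^ (k + 1) * dP g r n (m + 1) (k + 1)) := by
          rw [mul_assoc, ← mul_assoc (pp g r n m) (pp g r n m ^ k), ← pow_succ']
      _ = pp g r n m ^ (k + 1) *
            (((dP g r n m (k + 1))⁻¹ * (V g r n (m + 1) * dP g r n m (k + 1))) *
              dP g r n (m + 1) (k + 1)) := by
          rw [pe2 hclem.eq.symm]
      _ = pp g r n m ^ (k + 1) *
            ((dP g r n (m + 1) (k + 1) * (V g r n (m - k) * (dP g r n (m + 1) (k + 1))⁻¹)) *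
              dP g r n (m + 1) (k + 1)) := by
          rw [hdlem]
      _ = pp g r n m ^ (k + 1) * (dP g r n (m + 1) (k + 1) * V g r n (m - k)) := by
          group
      _ = pp g r n m ^ (k + 1) * dP g r n (m + 1) (k + 1 + 1) := by
          rw [dP_tail (k + 1) (m + 1), show m + 1 - (k + 1) = m - k by omega]

/-- the fundamental recursion `(pp m)^m = (pp (m-1))^m ⋅ dP m m` -/
lemma klem {m : ℕ} (hm : m ≤ n - 1) (hm1 : 1 ≤ m) :
    pp g r n m ^ m = pp g r n (m - 1) ^ m * dP g r n m m := by
  obtain ⟨j, rfl⟩ : ∃ j, m = j + 1 := ⟨m - 1, by omega⟩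
  have hstar : (V g r n (j + 1) * pp g r n j) ^ j * V g r n (j + 1) =
      pp g r n j ^ j * dP g r n (j + 1) (j + 1) := star hm j le_rfl
  have hq : SemiconjBy (pp g r n j) (V g r n (j + 1) * pp g r n j)
      (pp g r n j * V g r n (j + 1)) := by
    unfold SemiconjBy; group
  calc pp g r n (j + 1) ^ (j + 1)
      = (pp g r n j * V g r n (j + 1)) ^ (j + 1) := by rw [pp_succ]
    _ = pp g r n j * ((V g r n (j + 1) * pp g r n j) ^ j * V g r n (j + 1)) := by
        rw [pow_succ, ← mul_assoc, ← (hq.pow_right j).eq, mul_assoc]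
    _ = pp g r n j * (pp g r n j ^ j * dP g r n (j + 1) (j + 1)) := by rw [hstar]
    _ = pp g r n j ^ (j + 1) * dP g r n (j + 1) (j + 1) := by
        rw [← mul_assoc, ← pow_succ']

/-- `DD (m+1) = DD m ⋅ TT m` -/
lemma lj {m : ℕ} (hm : m ≤ n - 1) : DD g r n (m + 1) = DD g r n m * TT g r n m := by
  cases m with
  | zero => simp [DD, TT, pp, pV, dP]
  | succ j =>
    show pp g r n (j + 1) ^ (j + 2) = pp g r n j ^ (j + 1) * TT g r n (j + 1)
    rw [pow_succ, klem hm (by omega), show (j + 1 : ℕ) - 1 = j from rfl]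
    unfold TT pp
    rw [mul_assoc]

variable {g r n : ℕ}


lemma Trec (m : ℕ) : TT g r n (m + 1) = V g r n (m + 1) * (TT g r n m * V g r n (m + 1)) := by
  unfold TT
  rw [show dP g r n (m + 1) (m + 1) = V g r n (m + 1) * dP g r n m m from rfl,
    show pV g r n (m + 1) = pV g r n m * V g r n (m + 1) from rfl]
  group

lemma T_t (hn : 2 ≤ n) : ∀ m, Commute (TT g r n m) (X g r n (r + 1)) := by
  intro m
  induction m with
  | zero =>
    show Commute ((1 : G g r n) * (X g r n (r + 1) * 1)) _
    simpa using Commute.refl _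
  | succ m ih =>
    rcases Nat.eq_zero_or_pos m with rfl | hm
    · rw [Trec 0]
      rw [commute_iff_eq]
      have h0 : TT g r n 0 = X g r n (r + 1) := by simp [TT, dP, pV]
      rw [h0]
      simp only [← mul_assoc]
      exact (rel_braid4 hn).symm
    · rw [Trec m]
      have hv : Commute (V g r n (m + 1)) (X g r n (r + 1)) :=
        (rel_comm_tv (by omega)).symm
      exact hv.mul_left (ih.mul_left hv)

lemma T_far : ∀ m j, m + 2 ≤ j → Commute (TT g r n m) (V g r n j) := by
  intro m
  induction m with
  | zero =>
    intro j hj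
    show Commute ((1 : G g r n) * (X g r n (r + 1) * 1)) _
    simpa using rel_comm_tv (by omega)
  | succ m ih =>
    intro j hj
    rw [Trec m]
    have hv : Commute (V g r n (m + 1)) (V g r n j) := rel_comm_vv (by omega) (by omega)
    exact hv.mul_left ((ih j (by omega)).mul_left hv)

lemma T_s : ∀ m, m ≤ n - 1 → ∀ j, 1 ≤ j → j + 1 ≤ m → Commute (TT g r n m) (V g r n j) := by
  intro m
  induction m with
  | zero => omega
  | succ m ih =>
    intro hm j hj1 hjm
    rcases Nat.lt_or_ge (j + 1) (m + 1) with h | h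
    · rw [Trec m]
      have hv : Commute (V g r n (m + 1)) (V g r n j) :=
        (rel_comm_vv (j := j) (k := m + 1) hj1 (by omega)).symm
      exact hv.mul_left ((ih (by omega) j hj1 (by omega)).mul_left hv)
    · -- j = m
      have hjem : j = m := by omega
      subst hjem
      obtain ⟨l, rfl⟩ : ∃ l, j = l + 1 := ⟨j - 1, by omega⟩
      rw [Trec (l + 1), Trec l]
      have hT : Commute (TT g r n l) (V g r n (l + 2)) := T_far l (l + 2) (by omega)
      have hbr : V g r n (l + 1) * V g r n (l + 2) * V g r n (l + 1) =
          V g r n (l + 2) * V g r n (l + 1) * V g r n (l + 2) :=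
        rel_braid_vv (by omega) (by omega)
      have hbr' : V g r n (l + 1) * (V g r n (l + 2) * V g r n (l + 1)) =
          V g r n (l + 2) * (V g r n (l + 1) * V g r n (l + 2)) := by
        rw [← mul_assoc, ← mul_assoc, hbr]
      rw [commute_iff_eq]
      simp only [mul_assoc]
      -- goal : b (a (T (a (b a)))) = a (b (a (T (a b)))) with a = V(l+1), b = V(l+2)
      calc V g r n (l + 2) * (V g r n (l + 1) * (TT g r n l *
              (V g r n (l + 1) * (V g r n (l + 2) * V g r n (l + 1)))))
          = V g r n (l + 2) * (V g r n (l + 1) * (TT g r n l *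
              (V g r n (l + 2) * (V g r n (l + 1) * V g r n (l + 2))))) := by rw [hbr']
        _ = V g r n (l + 2) * (V g r n (l + 1) * (V g r n (l + 2) * (TT g r n l *
              (V g r n (l + 1) * V g r n (l + 2))))) := by rw [comm_lc hT]
        _ = V g r n (l + 1) * (V g r n (l + 2) * (V g r n (l + 1) * (TT g r n l *
              (V g r n (l + 1) * V g r n (l + 2))))) := by rw [pe3 hbr'.symm]

lemma D_t (hn : 2 ≤ n) : ∀ i, i ≤ n → Commute (DD g r n i) (X g r n (r + 1)) := by
  intro i
  induction i with
  | zero =>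
    intro _
    show Commute ((pp g r n (0 - 1)) ^ 0) _
    rw [pow_zero]
    exact Commute.one_left _
  | succ i ih =>
    intro hi
    rw [lj (by omega)]
    exact (ih (by omega)).mul_left (T_t hn i)

lemma D_s (hn : 2 ≤ n) : ∀ i, i ≤ n → ∀ k, 1 ≤ k → k + 1 ≤ i →
    Commute (DD g r n i) (V g r n k) := by
  intro i
  induction i with
  | zero => omega
  | succ m ih =>
    intro hi k hk1 hk
    have hsmall : ∀ k', 1 ≤ k' → k' + 1 ≤ m → Commute (DD g r n (m + 1)) (V g r n k') := by
      intro k' h1 h2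
      rw [lj (by omega)]
      exact (ih (by omega) k' h1 h2).mul_left (T_s m (by omega) k' h1 h2)
    rcases Nat.lt_or_ge (k + 1) (m + 1) with h | h
    · exact hsmall k hk1 (by omega)
    · have hkm : k = m := by omega
      subst hkm
      rcases Nat.lt_or_ge k 2 with h2 | h2
      · -- k = 1 : use the 4-braid relation
        have hk1' : k = 1 := by omega
        subst hk1'
        have h4 := rel_braid4 (g := g) (r := r) hn
        rw [commute_iff_eq]
        show pp g r n 1 ^ 2 * V g r n 1 = V g r n 1 * pp g r n 1 ^ 2
        have e : pp g r n 1 = X g r n (r + 1) * V g r n 1 := by simp [pp, pV]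
        rw [e, pow_two]
        simp only [← mul_assoc]
        rw [h4]
      · -- k ≥ 2 : conjugate v_1 up by the shift
        have h1 : Commute (DD g r n (k + 1)) (V g r n 1) := hsmall 1 le_rfl (by omega)
        have hsc0 : SemiconjBy (pp g r n k ^ (k - 1)) (V g r n 1) (V g r n (1 + (k - 1))) :=
          shift_pow (by omega) (k - 1) 1 le_rfl (by omega)
        rw [show 1 + (k - 1) = k by omega] at hsc0
        have e : V g r n k = pp g r n k ^ (k - 1) * V g r n 1 * (pp g r n k ^ (k - 1))⁻¹ := by
          rw [hsc0.eq]; group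
        rw [e]
        have hp : Commute (DD g r n (k + 1)) (pp g r n k ^ (k - 1)) := by
          show Commute (pp g r n k ^ (k + 1)) (pp g r n k ^ (k - 1))
          exact (Commute.refl _).pow_pow _ _
        exact (hp.mul_right h1).mul_right hp.inv_right

lemma comm_DD_pV (hn : 2 ≤ n) {i : ℕ} (hi : i ≤ n) :
    ∀ l, l + 1 ≤ i → Commute (DD g r n i) (pV g r n l) := by
  intro l
  induction l with
  | zero => exact fun _ => Commute.one_right _
  | succ l ih =>
    intro hl
    exact (ih (by omega)).mul_right (D_s hn i hi (l + 1) (by omega) (by omega))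

lemma comm_DD_DD (hn : 2 ≤ n) {i j : ℕ} (hi : i ≤ n) (hj : j ≤ i) :
    Commute (DD g r n i) (DD g r n j) := by
  rcases Nat.eq_zero_or_pos j with rfl | hj1
  · show Commute _ ((pp g r n (0 - 1)) ^ 0)
    rw [pow_zero]; exact Commute.one_right _
  · obtain ⟨l, rfl⟩ : ∃ l, j = l + 1 := ⟨j - 1, by omega⟩
    show Commute _ (pp g r n l ^ (l + 1))
    exact ((D_t hn i hi).mul_right (comm_DD_pV hn hi l (by omega))).pow_right _

lemma comm_vv_pV {j : ℕ} : ∀ l, l + 2 ≤ j → Commute (V g r n j) (pV g r n l) := by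
  intro l
  induction l with
  | zero => exact fun _ => Commute.one_right _
  | succ l ih =>
    intro hl
    exact (ih (by omega)).mul_right (rel_comm_vv (by omega) (by omega)).symm

lemma comm_vv_DD {i : ℕ} (hi1 : 1 ≤ i) : Commute (V g r n i) (DD g r n (i - 1)) := by
  rcases Nat.lt_or_ge i 2 with h | h
  · have : i = 1 := by omega
    subst this
    show Commute _ ((pp g r n (0 - 1)) ^ 0)
    rw [pow_zero]; exact Commute.one_right _
  · obtain ⟨l, rfl⟩ : ∃ l, i = l + 2 := ⟨i - 2, by omega⟩
    show Commute _ (pp g r n l ^ (l + 1))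
    exact (((rel_comm_tv (by omega)).symm).mul_right (comm_vv_pV l (by omega))).pow_right _

lemma core2 (hn : 2 ≤ n) {i : ℕ} (hi1 : 1 ≤ i) (hi2 : i ≤ n - 1) :
    DD g r n (i - 1) * DD g r n (i + 1) =
      DD g r n i * V g r n i * DD g r n i * V g r n i := by
  obtain ⟨l, rfl⟩ : ∃ l, i = l + 1 := ⟨i - 1, by omega⟩
  have hlj1 : DD g r n (l + 2) = DD g r n (l + 1) * TT g r n (l + 1) := lj (by omega)
  have hlj0 : DD g r n (l + 1) = DD g r n l * TT g r n l := lj (by omega)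
  have hTr := Trec (g := g) (r := r) (n := n) l
  have hc1 : Commute (DD g r n (l + 1)) (DD g r n l) := comm_DD_DD hn (by omega) (by omega)
  have hc2 : Commute (DD g r n l) (V g r n (l + 1)) := (comm_vv_DD (by omega)).symm
  calc DD g r n l * DD g r n (l + 2)
      = DD g r n l * (DD g r n (l + 1) * TT g r n (l + 1)) := by rw [hlj1]
    _ = DD g r n (l + 1) * (DD g r n l * TT g r n (l + 1)) := by rw [comm_lc hc1.symm]
    _ = DD g r n (l + 1) * (DD g r n l * (V g r n (l + 1) * (TT g r n l * V g r n (l + 1)))) := by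
        rw [hTr]
    _ = DD g r n (l + 1) * (V g r n (l + 1) * (DD g r n l * (TT g r n l * V g r n (l + 1)))) := by
        rw [comm_lc hc2]
    _ = DD g r n (l + 1) * (V g r n (l + 1) * (DD g r n l * TT g r n l * V g r n (l + 1))) := by
        rw [mul_assoc (DD g r n l) (TT g r n l)]
    _ = DD g r n (l + 1) * (V g r n (l + 1) * (DD g r n (l + 1) * V g r n (l + 1))) := by
        rw [← hlj0]
    _ = DD g r n (l + 1) * V g r n (l + 1) * DD g r n (l + 1) * V g r n (l + 1) := by
        group

lemma core1 (hn : 2 ≤ n) {i : ℕ} (hi1 : 1 ≤ i) (hi2 : i ≤ n - 1) :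
    DD g r n (i - 1) * DD g r n (i + 1) =
      V g r n i * DD g r n i * V g r n i * DD g r n i := by
  obtain ⟨l, rfl⟩ : ∃ l, i = l + 1 := ⟨i - 1, by omega⟩
  have hlj1 : DD g r n (l + 2) = DD g r n (l + 1) * TT g r n (l + 1) := lj (by omega)
  have hlj0 : DD g r n (l + 1) = DD g r n l * TT g r n l := lj (by omega)
  have hTr := Trec (g := g) (r := r) (n := n) l
  have hc2 : Commute (DD g r n l) (V g r n (l + 1)) := (comm_vv_DD (by omega)).symm
  have hc3 : Commute (TT g r n (l + 1)) (DD g r n (l + 1)) := by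
    have e : TT g r n (l + 1) = (DD g r n (l + 1))⁻¹ * DD g r n (l + 2) := by
      rw [hlj1]; group
    rw [e]
    exact ((Commute.refl _).inv_left).mul_left (comm_DD_DD hn (by omega) (by omega))
  calc DD g r n l * DD g r n (l + 2)
      = DD g r n l * (DD g r n (l + 1) * TT g r n (l + 1)) := by rw [hlj1]
    _ = DD g r n l * (TT g r n (l + 1) * DD g r n (l + 1)) := by rw [← hc3.eq]
    _ = DD g r n l * (V g r n (l + 1) * (TT g r n l * V g r n (l + 1)) * DD g r n (l + 1)) := by
        rw [hTr]
    _ = DD g r n l * (V g r n (l + 1) * (TT g r n l * (V g r n (l + 1) * DD g r n (l + 1)))) := by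
        group
    _ = V g r n (l + 1) * (DD g r n l * (TT g r n l * (V g r n (l + 1) * DD g r n (l + 1)))) := by
        rw [comm_lc hc2]
    _ = V g r n (l + 1) * (DD g r n l * TT g r n l * (V g r n (l + 1) * DD g r n (l + 1))) := by
        rw [mul_assoc (DD g r n l) (TT g r n l)]
    _ = V g r n (l + 1) * (DD g r n (l + 1) * (V g r n (l + 1) * DD g r n (l + 1))) := by
        rw [← hlj0]
    _ = V g r n (l + 1) * DD g r n (l + 1) * V g r n (l + 1) * DD g r n (l + 1) := by
        group


variable {g r n : ℕ}


lemma pull2 {H : Type*} [Group H] {x P Q : H} (a b : ℤ) (h : Commute x P) :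
    (x ^ a * P) * (x ^ b * Q) = x ^ (a + b) * (P * Q) := by
  calc (x ^ a * P) * (x ^ b * Q) = x ^ a * (P * x ^ b) * Q := by group
    _ = x ^ a * (x ^ b * P) * Q := by rw [(h.symm.zpow_right b).eq]
    _ = x ^ (a + b) * (P * Q) := by group

lemma range_prod : ∀ m : ℕ,
    ((List.range m).map fun k => V g r n (k + 1)).prod = pV g r n m := by
  intro m
  induction m with
  | zero => simp [pV]
  | succ m ih =>
    rw [List.range_succ, List.map_append, List.prod_append, ih]
    simp [pV]

lemma A_eq (i : ℕ) : A g r n i = X g r n r ^ ((1 : ℤ) - (i : ℤ)) * DD g r n i := by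
  unfold A DD pp
  rw [range_prod]

lemma comm_x_pV : ∀ l, Commute (X g r n r) (pV g r n l) := by
  intro l
  induction l with
  | zero => exact Commute.one_right _
  | succ l ih => exact ih.mul_right rel_comm_xv

lemma comm_x_DD (i : ℕ) : Commute (X g r n r) (DD g r n i) :=
  (rel_comm_xt.mul_right (comm_x_pV _)).pow_right _


end LabruereParis

open LabruereParis in
/-- Relation (T1) in the proof of Theorem 3.1 of Labruère–Paris: in `G(g,r,n)`,
`A_{i-1}A_{i+1} = v_iA_iv_iA_i = A_iv_iA_iv_i` for `1 ≤ i ≤ n-1`. -/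
theorem relation_T1 (g r n : ℕ) (hg : 1 ≤ g) (hn : 2 ≤ n)
    (i : ℕ) (hi1 : 1 ≤ i) (hi2 : i ≤ n - 1) :
    A g r n (i - 1) * A g r n (i + 1) = V g r n i * A g r n i * V g r n i * A g r n i ∧
    A g r n (i - 1) * A g r n (i + 1) = A g r n i * V g r n i * A g r n i * V g r n i := by
  set x := X g r n r with hx
  have hexp : ((1 : ℤ) - ((i - 1 : ℕ) : ℤ)) + ((1 : ℤ) - ((i + 1 : ℕ) : ℤ)) =
      ((1 : ℤ) - (i : ℤ)) + ((1 : ℤ) - (i : ℤ)) := by omega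
  have hxc : Commute x (V g r n i) := rel_comm_xv
  have hLHS : A g r n (i - 1) * A g r n (i + 1) =
      x ^ (((1 : ℤ) - (i : ℤ)) + ((1 : ℤ) - (i : ℤ))) *
        (DD g r n (i - 1) * DD g r n (i + 1)) := by
    rw [A_eq, A_eq, pull2 _ _ (comm_x_DD (i - 1)), hexp]
  constructor
  · rw [hLHS, core1 hn hi1 hi2]
    have hswap : x ^ ((1 : ℤ) - (i : ℤ)) * (V g r n i * DD g r n i) =
        V g r n i * (x ^ ((1 : ℤ) - (i : ℤ)) * DD g r n i) :=
      comm_lc (hxc.zpow_left _) _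
    rw [show V g r n i * DD g r n i * V g r n i * DD g r n i =
        (V g r n i * DD g r n i) * (V g r n i * DD g r n i) by group,
      ← pull2 _ _ (hxc.mul_right (comm_x_DD i)), hswap, A_eq]
    group
    rfl
  · rw [hLHS, core2 hn hi1 hi2]
    rw [show DD g r n i * V g r n i * DD g r n i * V g r n i =
        (DD g r n i * V g r n i) * (DD g r n i * V g r n i) by group,
      ← pull2 _ _ ((comm_x_DD i).mul_right hxc), A_eq]
    group
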